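/- Let W ⊆ V = ℂ^m be invariant under B_0, …, B_N, and suppose q^λ ≠ 1. Then W^{N+1} ∩ (K_V + L_V) = K_W + L_W, where K_V = ⊕_i ker B_i, L_V = {(h,…,h) : h ∈ ker(ΣB_j − (1−q^λ)1_m)}, and K_W, L_W are the analogous spaces with ker replaced by kernel intersected with W (i.e. K_W = ⊕_i (ker B_i ∩ W), L_W = {(h,…,h) : h ∈ W, (ΣB_j)h = (1−q^λ)h}). -/
import Mathlib


/-- For a `B_i`-invariant subspace `W` and `q^λ ≠ 1` (written `c ≠ 1`),
`W^{N+1} ∩ (K_V + L_V) = K_W + L_W`. -/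
theorem qmc_WKL (m N : ℕ) (c : ℂ) (hc : c ≠ 1)
    (B : Fin (N + 1) → Matrix (Fin m) (Fin m) ℂ)
    (W : Submodule ℂ (Fin m → ℂ))
    (hW : ∀ i, ∀ w ∈ W, (B i).mulVec w ∈ W)
    (const : (Fin m → ℂ) →ₗ[ℂ] (Fin (N + 1) → Fin m → ℂ))
    (hconst : const = LinearMap.pi fun _ => LinearMap.id) :
    (Submodule.pi Set.univ fun _ : Fin (N + 1) => W) ⊓
      ((Submodule.pi Set.univ fun i => LinearMap.ker (B i).mulVecLin) ⊔
        Submodule.map const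
          (LinearMap.ker ((∑ j, B j) - (1 - c) • (1 : Matrix (Fin m) (Fin m) ℂ)).mulVecLin))
    = (Submodule.pi Set.univ fun i => LinearMap.ker (B i).mulVecLin ⊓ W) ⊔
        Submodule.map const
          (LinearMap.ker ((∑ j, B j) - (1 - c) • (1 : Matrix (Fin m) (Fin m) ℂ)).mulVecLin ⊓ W) := by
  subst hconst
  have hc' : (1 - c) ≠ 0 := sub_ne_zero.mpr (Ne.symm hc)
  apply le_antisymm
  · rintro v ⟨hvW, hv2⟩
    rw [SetLike.mem_coe, Submodule.mem_sup] at hv2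
    rw [SetLike.mem_coe] at hvW
    obtain ⟨k, hk, y, hy, hsum⟩ := hv2
    obtain ⟨h, hh, rfl⟩ := hy
    simp only [Submodule.mem_pi, Set.mem_univ, forall_true_left, LinearMap.mem_ker,
      Matrix.mulVecLin_apply] at hk hvW
    have hvk : ∀ i, v i = k i + h := by
      intro i
      exact (congrFun hsum i).symm
    have hkey : (∑ j, B j).mulVec h = (1 - c) • h := by
      have := hh
      simp only [SetLike.mem_coe, LinearMap.mem_ker, Matrix.mulVecLin_apply, Matrix.sub_mulVec,
        Matrix.smul_mulVec, Matrix.one_mulVec, sub_eq_zero] at this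
      exact this
    have sum_mv : ∀ s : Finset (Fin (N + 1)), (∑ j ∈ s, B j).mulVec h = ∑ j ∈ s, (B j).mulVec h := by
      intro s
      induction s using Finset.cons_induction with
      | empty => simp [Matrix.zero_mulVec]
      | cons a s ha ih => rw [Finset.sum_cons, Finset.sum_cons, Matrix.add_mulVec, ih]
    have hsmul : (1 - c) • h ∈ W := by
      rw [← hkey]
      have : (∑ j, B j).mulVec h = ∑ j, (B j).mulVec (v j) := by
        rw [sum_mv]
        refine Finset.sum_congr rfl fun j _ => ?_
        rw [hvk j, Matrix.mulVec_add, hk j, zero_add]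
      rw [this]
      exact Submodule.sum_mem W fun j _ => hW j _ (hvW j)
    have hhW : h ∈ W := by
      have := Submodule.smul_mem W (1 - c)⁻¹ hsmul
      rwa [smul_smul, inv_mul_cancel₀ hc', one_smul] at this
    rw [Submodule.mem_sup]
    refine ⟨k, ?_, _, ⟨h, ⟨SetLike.mem_coe.mp hh, hhW⟩, rfl⟩, hsum⟩
    simp only [Submodule.mem_pi, Set.mem_univ, forall_true_left, Submodule.mem_inf,
      LinearMap.mem_ker, Matrix.mulVecLin_apply]
    intro i
    refine ⟨hk i, ?_⟩
    have : k i = v i - h := by rw [hvk i]; ring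
    rw [this]
    exact Submodule.sub_mem W (hvW i) hhW
  · refine sup_le (le_inf ?_ ?_) (le_inf ?_ ?_)
    · intro v hv
      simp only [Submodule.mem_pi, Set.mem_univ, forall_true_left, Submodule.mem_inf] at hv ⊢
      exact fun i => (hv i).2
    · refine le_trans ?_ le_sup_left
      intro v hv
      simp only [Submodule.mem_pi, Set.mem_univ, forall_true_left, Submodule.mem_inf] at hv ⊢
      exact fun i => (hv i).1
    · rintro _ ⟨h, ⟨hh, hhW⟩, rfl⟩
      simp only [Submodule.mem_pi, Set.mem_univ, forall_true_left]
      intro i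
      exact hhW
    · exact le_trans (Submodule.map_mono inf_le_left) le_sup_right
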